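/- Let W be a simple voting game on [n] and let Ŵ be the game obtained when player j donates its vote to player i. Then for every S⊆[n] with i,j∈S, the NO-efficacy scores satisfy α̂⁻_i(S\{i,j}) ≥ max( α⁻_i(S\{i,j}), α⁻_j(S\{i,j}) ) and α̂⁻_i(S\{i}) ≥ max( α⁻_i(S\{i}), α⁻_j(S\{j}) ), where α̂ denotes efficacy scores computed in Ŵ and α those computed in W. -/
import Mathlib


open Finset

variable {α : Type*} [Fintype α] [DecidableEq α]

/-- A simple voting game on the player set `α`: a monotone collection of winning
coalitions in which the empty coalition loses and the full coalition wins. -/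
def SimpleVotingGame (W : Finset (Finset α)) : Prop :=
  (∀ S T : Finset α, S ∈ W → S ⊆ T → T ∈ W) ∧ (∅ : Finset α) ∉ W ∧ (univ : Finset α) ∈ W

/-- Player `i` is YES-decisive in the division `S`. -/
def YesDecisive (W : Finset (Finset α)) (i : α) (S : Finset α) : Prop :=
  i ∈ S ∧ S ∈ W ∧ S.erase i ∉ W

/-- Player `i` is NO-decisive in the division `S`. -/
def NoDecisive (W : Finset (Finset α)) (i : α) (S : Finset α) : Prop :=
  i ∉ S ∧ S ∉ W ∧ insert i S ∈ W

/-- The loyal children of a winning division `S`: the winning divisions `S \ {k}`, `k ∈ S`. -/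
def LCwin (W : Finset (Finset α)) (S : Finset α) : Finset (Finset α) :=
  (S.image fun k => S.erase k).filter (· ∈ W)

/-- The loyal children of a losing division `S`: the losing divisions `S ∪ {k}`, `k ∉ S`. -/
def LCloss (W : Finset (Finset α)) (S : Finset α) : Finset (Finset α) :=
  (Sᶜ.image fun k => insert k S).filter (· ∉ W)

/-- The YES-efficacy score `α⁺_i(S)`: `1` if `i` is YES-decisive in `S`, `0` if `S` is
losing or `i ∉ S`, and otherwise the arithmetic mean of `α⁺_i` over the loyal children. -/
noncomputable def alphaPlus (W : Finset (Finset α)) (i : α) (S : Finset α) : ℝ :=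
  if i ∈ S ∧ S ∈ W ∧ S.erase i ∉ W then 1
  else if S ∉ W ∨ i ∉ S then 0
  else (∑ T ∈ (LCwin W S).attach, alphaPlus W i T.1) / (LCwin W S).card
termination_by S.card
decreasing_by
  obtain ⟨T, hT⟩ := T
  simp only [LCwin, Finset.mem_filter, Finset.mem_image] at hT
  obtain ⟨⟨k, hk, rfl⟩, -⟩ := hT
  simpa using Finset.card_erase_lt_of_mem hk

/-- The NO-efficacy score `α⁻_i(S)`: `1` if `i` is NO-decisive in `S`, `0` if `S` is
winning or `i ∈ S`, and otherwise the arithmetic mean of `α⁻_i` over the loyal children. -/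
noncomputable def alphaMinus (W : Finset (Finset α)) (i : α) (S : Finset α) : ℝ :=
  if i ∉ S ∧ S ∉ W ∧ insert i S ∈ W then 1
  else if S ∈ W ∨ i ∈ S then 0
  else (∑ T ∈ (LCloss W S).attach, alphaMinus W i T.1) / (LCloss W S).card
termination_by Sᶜ.card
decreasing_by
  obtain ⟨T, hT⟩ := T
  simp only [LCloss, Finset.mem_filter, Finset.mem_image] at hT
  obtain ⟨⟨k, hk, rfl⟩, -⟩ := hT
  rw [Finset.compl_insert]
  exact Finset.card_erase_lt_of_mem hk

/-- The efficacy score `α_i(S) = α⁺_i(S) + α⁻_i(S)`. -/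
noncomputable def alphaScore (W : Finset (Finset α)) (i : α) (S : Finset α) : ℝ :=
  alphaPlus W i S + alphaMinus W i S

/-- The Recursive Measure of YES-voting power (a priori, equiprobable divisions). -/
noncomputable def RMplus (W : Finset (Finset α)) (i : α) : ℝ :=
  (1 / 2 ^ Fintype.card α) * ∑ S : Finset α, alphaPlus W i S

/-- The Recursive Measure of NO-voting power (a priori, equiprobable divisions). -/
noncomputable def RMminus (W : Finset (Finset α)) (i : α) : ℝ :=
  (1 / 2 ^ Fintype.card α) * ∑ S : Finset α, alphaMinus W i S

/-- The Recursive Measure of voting power of player `i` (a priori):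
`RM_i = 2^{-m} · Σ_S α_i(S)` where `m` is the number of players. -/
noncomputable def RM (W : Finset (Finset α)) (i : α) : ℝ :=
  (1 / 2 ^ Fintype.card α) * ∑ S : Finset α, alphaScore W i S

/-- `d` is a dummy voter: `d` is decisive in no division. -/
def IsDummy (W : Finset (Finset α)) (d : α) : Prop :=
  ∀ S : Finset α, d ∉ S → (insert d S ∈ W ↔ S ∈ W)

/-- Player `j` weakly dominates player `i`. -/
def WeaklyDominates (W : Finset (Finset α)) (j i : α) : Prop :=
  ∀ S : Finset α, i ∉ S → j ∉ S → insert i S ∈ W → insert j S ∈ W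

/-- `What` is the game obtained from `W` by player `j` donating its vote to player `i`. -/
def Donation (W What : Finset (Finset α)) (i j : α) : Prop :=
  ∀ S : Finset α, i ∉ S → j ∉ S →
    (insert i (insert j S) ∈ What ↔ insert i (insert j S) ∈ W) ∧
    (insert i S ∈ What ↔ insert i (insert j S) ∈ W) ∧
    (insert j S ∈ What ↔ S ∈ W) ∧
    (S ∈ What ↔ S ∈ W)

/-- `What` is obtained from `W` by inducing a (weak, symmetric) quarrel between `i` and `j`. -/
def Quarrel (W What : Finset (Finset α)) (i j : α) : Prop :=
  ∀ S : Finset α, i ∉ S → j ∉ S →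
    (insert i (insert j S) ∈ What ↔ (insert i S ∈ W ∨ insert j S ∈ W)) ∧
    (S ∈ What ↔ (insert i S ∈ W ∧ insert j S ∈ W)) ∧
    (insert i S ∈ What ↔ insert i S ∈ W) ∧
    (insert j S ∈ What ↔ insert j S ∈ W)

/-- The voting-independent (product) probability of a division `S`, given the
individual YES-vote probabilities `p`. -/
noncomputable def prodDist (p : α → ℝ) (S : Finset α) : ℝ :=
  (∏ k ∈ S, p k) * ∏ k ∈ Sᶜ, (1 - p k)

/-- The generalized Recursive Measure of YES-voting power under a
voting-independent probability distribution with vote probabilities `p`. -/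
noncomputable def RMplusP (W : Finset (Finset α)) (p : α → ℝ) (i : α) : ℝ :=
  ∑ S : Finset α, alphaPlus W i S * prodDist p S

/-- The generalized Recursive Measure of NO-voting power under a
voting-independent probability distribution with vote probabilities `p`. -/
noncomputable def RMminusP (W : Finset (Finset α)) (p : α → ℝ) (i : α) : ℝ :=
  ∑ S : Finset α, alphaMinus W i S * prodDist p S

-- helper lemmas stage 1
section Helpers
variable {α : Type*} [Fintype α] [DecidableEq α]

/-- Index set of losing children. -/
def Kset (W : Finset (Finset α)) (S : Finset α) : Finset α :=
  Sᶜ.filter (fun k => insert k S ∉ W)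

lemma mem_Kset {W : Finset (Finset α)} {S : Finset α} {k : α} :
    k ∈ Kset W S ↔ k ∉ S ∧ insert k S ∉ W := by
  simp [Kset]

lemma LCloss_eq_image (W : Finset (Finset α)) (S : Finset α) :
    LCloss W S = (Kset W S).image (fun k => insert k S) := by
  rw [LCloss, Kset, Finset.filter_image]

lemma insert_injOn (S : Finset α) :
    Set.InjOn (fun k => insert k S) (Kset W S : Set α) := by
  intro a ha b hb h
  simp only [mem_coe, mem_Kset] at ha hb
  have h' : insert a S = insert b S := h
  have : a ∈ insert b S := h' ▸ Finset.mem_insert_self a S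
  rcases Finset.mem_insert.1 this with h' | h'
  · exact h'
  · exact absurd h' ha.1

lemma LCloss_card (W : Finset (Finset α)) (S : Finset α) :
    (LCloss W S).card = (Kset W S).card := by
  rw [LCloss_eq_image, Finset.card_image_of_injOn (insert_injOn S)]

lemma LCloss_sum (W : Finset (Finset α)) (S : Finset α) (F : Finset α → ℝ) :
    ∑ T ∈ LCloss W S, F T = ∑ k ∈ Kset W S, F (insert k S) := by
  rw [LCloss_eq_image, Finset.sum_image (insert_injOn S)]

lemma alphaMinus_of_dec {W : Finset (Finset α)} {i : α} {S : Finset α}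
    (h : i ∉ S ∧ S ∉ W ∧ insert i S ∈ W) : alphaMinus W i S = 1 := by
  rw [alphaMinus, if_pos h]

lemma alphaMinus_of_mem {W : Finset (Finset α)} {i : α} {S : Finset α}
    (h : i ∈ S) : alphaMinus W i S = 0 := by
  rw [alphaMinus, if_neg (by tauto), if_pos (Or.inr h)]

lemma alphaMinus_of_win {W : Finset (Finset α)} {i : α} {S : Finset α}
    (h : S ∈ W) : alphaMinus W i S = 0 := by
  rw [alphaMinus, if_neg (by tauto), if_pos (Or.inl h)]

lemma alphaMinus_mean {W : Finset (Finset α)} {i : α} {S : Finset α}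
    (hiS : i ∉ S) (hSW : S ∉ W) (hins : insert i S ∉ W) :
    alphaMinus W i S =
      (∑ k ∈ Kset W S, alphaMinus W i (insert k S)) / (Kset W S).card := by
  rw [alphaMinus, if_neg (by tauto), if_neg (by tauto), Finset.sum_attach (LCloss W S),
    LCloss_sum, LCloss_card]

lemma alphaMinus_nonneg (W : Finset (Finset α)) (i : α) (S : Finset α) :
    0 ≤ alphaMinus W i S := by
  rw [alphaMinus]
  split
  · norm_num
  split
  · norm_num
  · apply div_nonneg _ (by positivity)
    apply Finset.sum_nonneg
    intro T _
    exact alphaMinus_nonneg W i T.1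
termination_by Sᶜ.card
decreasing_by
  obtain ⟨T, hT⟩ := T
  simp only [LCloss, Finset.mem_filter, Finset.mem_image] at hT
  obtain ⟨⟨k, hk, rfl⟩, -⟩ := hT
  rw [Finset.compl_insert]
  exact Finset.card_erase_lt_of_mem hk

lemma alphaMinus_le_one (W : Finset (Finset α)) (i : α) (S : Finset α) :
    alphaMinus W i S ≤ 1 := by
  rw [alphaMinus]
  split
  · norm_num
  split
  · norm_num
  · rcases Nat.eq_zero_or_pos (LCloss W S).card with h | h
    · rw [Finset.card_eq_zero] at h
      simp [h]
    · rw [div_le_one (by exact_mod_cast h)]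
      calc ∑ T ∈ (LCloss W S).attach, alphaMinus W i T.1
          ≤ ∑ _T ∈ (LCloss W S).attach, (1:ℝ) :=
            Finset.sum_le_sum (fun T _ => alphaMinus_le_one W i T.1)
        _ = (LCloss W S).card := by simp
termination_by Sᶜ.card
decreasing_by
  obtain ⟨T, hT⟩ := T
  simp only [LCloss, Finset.mem_filter, Finset.mem_image] at hT
  obtain ⟨⟨k, hk, rfl⟩, -⟩ := hT
  rw [Finset.compl_insert]
  exact Finset.card_erase_lt_of_mem hk

lemma mean_le {γ : Type*} [DecidableEq γ] {K D : Finset γ} (f g : γ → ℝ) (ι : γ → γ)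
    (hinj : Set.InjOn ι K) (hmap : ∀ k ∈ K, ι k ∈ D)
    (hle : ∀ k ∈ K, f k ≤ g (ι k))
    (hextra : ∀ d ∈ D, d ∉ K.image ι → g d = 1)
    (hf0 : ∀ k ∈ K, 0 ≤ f k) (hf1 : ∀ k ∈ K, f k ≤ 1)
    (hK : K.Nonempty) :
    (∑ k ∈ K, f k) / K.card ≤ (∑ d ∈ D, g d) / D.card := by
  have himg : K.image ι ⊆ D := by
    intro d hd
    obtain ⟨k, hk, rfl⟩ := Finset.mem_image.1 hd
    exact hmap k hk
  have hinj' : ∀ x ∈ K, ∀ y ∈ K, ι x = ι y → x = y := fun x hx y hy h => hinj hx hy h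
  have hcard : (K.image ι).card = K.card := Finset.card_image_of_injOn hinj
  have hcd : K.card ≤ D.card := hcard ▸ Finset.card_le_card himg
  have hsplit : ∑ d ∈ D \ K.image ι, g d + ∑ d ∈ K.image ι, g d = ∑ d ∈ D, g d :=
    Finset.sum_sdiff himg
  have h1 : ∑ d ∈ K.image ι, g d = ∑ k ∈ K, g (ι k) := Finset.sum_image hinj'
  have h2 : ∑ k ∈ K, f k ≤ ∑ k ∈ K, g (ι k) := Finset.sum_le_sum hle
  have h3 : ∑ d ∈ D \ K.image ι, g d = ((D.card - K.card : ℕ) : ℝ) := by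
    rw [Finset.sum_congr rfl (fun d hd => hextra d (Finset.mem_sdiff.1 hd).1 (Finset.mem_sdiff.1 hd).2)]
    rw [Finset.sum_const, Finset.card_sdiff_of_subset himg, hcard]
    simp
  have hF0 : 0 ≤ ∑ k ∈ K, f k := Finset.sum_nonneg hf0
  have hF1 : ∑ k ∈ K, f k ≤ K.card := by
    calc ∑ k ∈ K, f k ≤ ∑ _k ∈ K, (1:ℝ) := Finset.sum_le_sum hf1
      _ = K.card := by simp
  have hG : ((D.card : ℝ) - K.card) + ∑ k ∈ K, f k ≤ ∑ d ∈ D, g d := by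
    rw [← hsplit, h3, h1, Nat.cast_sub hcd]
    linarith
  have hKpos : (0:ℝ) < K.card := by exact_mod_cast Finset.card_pos.2 hK
  have hDpos : (0:ℝ) < D.card := by
    exact_mod_cast lt_of_lt_of_le (Finset.card_pos.2 hK) hcd
  rw [div_le_div_iff₀ hKpos hDpos]
  have hcd' : (K.card : ℝ) ≤ D.card := by exact_mod_cast hcd
  nlinarith [mul_le_mul_of_nonneg_left hG (le_of_lt hKpos)]

end Helpers
section Main
variable {α : Type*} [Fintype α] [DecidableEq α]
variable {W What : Finset (Finset α)} {i j : α}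

theorem lemB (hW : SimpleVotingGame W) (hij : i ≠ j) (hdon : Donation W What i j)
    (T : Finset α) (hi : i ∉ T) (hj : j ∉ T) :
    alphaMinus W i (insert j T) ≤ alphaMinus What i (insert j T) ∧
    alphaMinus W j (insert i T) ≤ alphaMinus What i (insert j T) := by
  obtain ⟨hd1, hd2, hd3, hd4⟩ := hdon T hi hj
  have hiU : i ∉ insert j T := by simp [hij, hi]
  have hjU' : j ∉ insert i T := by simp [hij.symm, hj]
  by_cases hT : T ∈ W
  · have h1 : insert j T ∈ W := hW.1 _ _ hT (Finset.subset_insert _ _)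
    have h2 : insert i T ∈ W := hW.1 _ _ hT (Finset.subset_insert _ _)
    rw [alphaMinus_of_win (hd3.2 hT), alphaMinus_of_win h1, alphaMinus_of_win h2]
    exact ⟨le_refl 0, le_refl 0⟩
  by_cases hTij : insert i (insert j T) ∈ W
  · have hbeta : alphaMinus What i (insert j T) = 1 :=
      alphaMinus_of_dec ⟨hiU, fun h => hT (hd3.1 h), hd1.2 hTij⟩
    rw [hbeta]
    exact ⟨alphaMinus_le_one W i _, alphaMinus_le_one W j _⟩
  · -- mean case
    have hjUW : insert j T ∉ W := fun h => hTij (hW.1 _ _ h (Finset.subset_insert _ _))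
    have hiTW : insert i T ∉ W := fun h =>
      hTij (hW.1 _ _ h (Finset.insert_subset_insert i (Finset.subset_insert _ _)))
    have hTji : insert j (insert i T) ∉ W := by
      rw [Finset.insert_comm]; exact hTij
    have hUWhat : insert j T ∉ What := fun h => hT (hd3.1 h)
    have hiUWhat : insert i (insert j T) ∉ What := fun h => hTij (hd1.1 h)
    rw [alphaMinus_mean hiU hjUW hTij, alphaMinus_mean hjU' hiTW hTji,
      alphaMinus_mean hiU hUWhat hiUWhat]
    have hKne1 : i ∈ Kset W (insert j T) := mem_Kset.2 ⟨hiU, hTij⟩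
    constructor
    · -- part 1: ι = id
      apply mean_le _ _ id (Set.injOn_id _)
      · -- hmap
        intro k hk
        obtain ⟨hkU, hkW⟩ := mem_Kset.1 hk
        simp only [id]
        refine mem_Kset.2 ⟨hkU, ?_⟩
        by_cases hki : k = i
        · subst hki; exact fun h => hkW (hd1.1 h)
        · have hkj : k ≠ j := fun h => hkU (h ▸ Finset.mem_insert_self j T)
          have hkT : k ∉ T := fun h => hkU (Finset.mem_insert_of_mem h)
          rw [Finset.insert_comm]
          intro h
          have hc := (hdon (insert k T) (by simp [Ne.symm hki, hi]) (by simp [Ne.symm hkj, hj])).2.2.1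
          have : insert k T ∈ W := hc.1 h
          exact hkW (by
            rw [Finset.insert_comm]
            exact hW.1 _ _ this (Finset.subset_insert _ _))
      · -- hle
        intro k hk
        obtain ⟨hkU, hkW⟩ := mem_Kset.1 hk
        simp only [id]
        by_cases hki : k = i
        · rw [hki, alphaMinus_of_mem (Finset.mem_insert_self i _)]
          exact alphaMinus_nonneg _ _ _
        · have hkj : k ≠ j := fun h => hkU (h ▸ Finset.mem_insert_self j T)
          have hkT : k ∉ T := fun h => hkU (Finset.mem_insert_of_mem h)
          rw [Finset.insert_comm]
          exact (lemB hW hij hdon (insert k T) (by simp [Ne.symm hki, hi])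
            (by simp [Ne.symm hkj, hj])).1
      · -- hextra
        intro d hd hnd
        rw [Finset.image_id] at hnd
        obtain ⟨hdU, hdWhat⟩ := mem_Kset.1 hd
        have hdi : d ≠ i := by
          intro h
          exact hnd (mem_Kset.2 ⟨hdU, by rw [h]; exact hTij⟩)
        have hdj : d ≠ j := fun h => hdU (h ▸ Finset.mem_insert_self j T)
        have hdT : d ∉ T := fun h => hdU (Finset.mem_insert_of_mem h)
        have hdW : insert d (insert j T) ∈ W := by
          by_contra h
          exact hnd (mem_Kset.2 ⟨hdU, h⟩)
        have hidU : i ∉ insert d (insert j T) := by simp [Ne.symm hdi, hij, hi]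
        refine alphaMinus_of_dec ⟨hidU, hdWhat, ?_⟩
        have hc := (hdon (insert d T) (by simp [Ne.symm hdi, hi]) (by simp [Ne.symm hdj, hj])).1
        rw [Finset.insert_comm d j T]
        refine hc.2 (hW.1 _ _ ?_ (Finset.subset_insert _ _))
        rw [← Finset.insert_comm]
        exact hdW
      · exact fun k _ => alphaMinus_nonneg _ _ _
      · exact fun k _ => alphaMinus_le_one _ _ _
      · exact ⟨i, hKne1⟩
    · -- part 2: ι = swap i j
      have hjK2 : j ∈ Kset W (insert i T) := mem_Kset.2 ⟨hjU', hTji⟩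
      apply mean_le _ _ (Equiv.swap i j) (Equiv.injective _).injOn
      · -- hmap
        intro k hk
        obtain ⟨hkU', hkW⟩ := mem_Kset.1 hk
        have hki : k ≠ i := fun h => hkU' (h ▸ Finset.mem_insert_self i T)
        have hkT : k ∉ T := fun h => hkU' (Finset.mem_insert_of_mem h)
        by_cases hkj : k = j
        · subst hkj
          rw [Equiv.swap_apply_right]
          exact mem_Kset.2 ⟨hiU, hiUWhat⟩
        · rw [Equiv.swap_apply_of_ne_of_ne hki hkj]
          refine mem_Kset.2 ⟨by simp [hkj, hkT], ?_⟩
          rw [Finset.insert_comm]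
          intro h
          have hc := (hdon (insert k T) (by simp [Ne.symm hki, hi]) (by simp [Ne.symm hkj, hj])).2.2.1
          have hkTW : insert k T ∈ W := hc.1 h
          refine hkW ?_
          rw [Finset.insert_comm]
          exact hW.1 _ _ hkTW (Finset.subset_insert _ _)
      · -- hle
        intro k hk
        obtain ⟨hkU', hkW⟩ := mem_Kset.1 hk
        have hki : k ≠ i := fun h => hkU' (h ▸ Finset.mem_insert_self i T)
        have hkT : k ∉ T := fun h => hkU' (Finset.mem_insert_of_mem h)
        by_cases hkj : k = j
        · rw [hkj, alphaMinus_of_mem (Finset.mem_insert_self j _)]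
          exact alphaMinus_nonneg _ _ _
        · rw [Equiv.swap_apply_of_ne_of_ne hki hkj]
          rw [Finset.insert_comm k i, Finset.insert_comm k j]
          exact (lemB hW hij hdon (insert k T) (by simp [Ne.symm hki, hi])
            (by simp [Ne.symm hkj, hj])).2
      · -- hextra
        intro d hd hnd
        obtain ⟨hdU, hdWhat⟩ := mem_Kset.1 hd
        have hdj : d ≠ j := fun h => hdU (h ▸ Finset.mem_insert_self j T)
        have hdT : d ∉ T := fun h => hdU (Finset.mem_insert_of_mem h)
        have hdi : d ≠ i := by
          intro h
          refine hnd (Finset.mem_image.2 ⟨j, hjK2, ?_⟩)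
          rw [h, Equiv.swap_apply_right]
        have hdK2 : d ∉ Kset W (insert i T) := fun h =>
          hnd (Finset.mem_image.2 ⟨d, h, Equiv.swap_apply_of_ne_of_ne hdi hdj⟩)
        have hdW : insert d (insert i T) ∈ W := by
          by_contra h
          exact hdK2 (mem_Kset.2 ⟨by simp [hdi, hdT], h⟩)
        have hidU : i ∉ insert d (insert j T) := by simp [Ne.symm hdi, hij, hi]
        refine alphaMinus_of_dec ⟨hidU, hdWhat, ?_⟩
        have hc := (hdon (insert d T) (by simp [Ne.symm hdi, hi]) (by simp [Ne.symm hdj, hj])).1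
        rw [Finset.insert_comm d j T]
        refine hc.2 ?_
        have : insert i (insert d T) ∈ W := by
          rw [← Finset.insert_comm]
          exact hdW
        exact hW.1 _ _ this (Finset.insert_subset_insert i (Finset.subset_insert _ _))
      · exact fun k _ => alphaMinus_nonneg _ _ _
      · exact fun k _ => alphaMinus_le_one _ _ _
      · exact ⟨j, hjK2⟩
termination_by Tᶜ.card
decreasing_by
  all_goals
    rw [Finset.compl_insert]
    exact Finset.card_erase_lt_of_mem (Finset.mem_compl.2 hkT)

end Main
section Main2
variable {α : Type*} [Fintype α] [DecidableEq α]
variable {W What : Finset (Finset α)} {i j : α}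

theorem lemA (hW : SimpleVotingGame W) (hij : i ≠ j) (hdon : Donation W What i j)
    (T : Finset α) (hi : i ∉ T) (hj : j ∉ T) :
    alphaMinus W i T ≤ alphaMinus What i T ∧
    alphaMinus W j T ≤ alphaMinus What i T := by
  obtain ⟨hd1, hd2, hd3, hd4⟩ := hdon T hi hj
  by_cases hT : T ∈ W
  · rw [alphaMinus_of_win (hd4.2 hT), alphaMinus_of_win (i := i) hT,
      alphaMinus_of_win (i := j) hT]
    exact ⟨le_refl 0, le_refl 0⟩
  by_cases hTij : insert i (insert j T) ∈ W
  · have hbeta : alphaMinus What i T = 1 :=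
      alphaMinus_of_dec ⟨hi, fun h => hT (hd4.1 h), hd2.2 hTij⟩
    rw [hbeta]
    exact ⟨alphaMinus_le_one W i _, alphaMinus_le_one W j _⟩
  · -- mean case
    have hjUW : insert j T ∉ W := fun h => hTij (hW.1 _ _ h (Finset.subset_insert _ _))
    have hiTW : insert i T ∉ W := fun h =>
      hTij (hW.1 _ _ h (Finset.insert_subset_insert i (Finset.subset_insert _ _)))
    have hTWhat : T ∉ What := fun h => hT (hd4.1 h)
    have hiTWhat : insert i T ∉ What := fun h => hTij (hd2.1 h)
    rw [alphaMinus_mean hi hT hiTW, alphaMinus_mean hj hT hjUW,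
      alphaMinus_mean hi hTWhat hiTWhat]
    have hiK : i ∈ Kset W T := mem_Kset.2 ⟨hi, hiTW⟩
    have hjK : j ∈ Kset W T := mem_Kset.2 ⟨hj, hjUW⟩
    have hKeq : Kset What T = Kset W T := by
      ext d
      simp only [mem_Kset]
      constructor
      · rintro ⟨hdT, hdWhat⟩
        refine ⟨hdT, ?_⟩
        by_cases hdi : d = i
        · rw [hdi]; exact hiTW
        by_cases hdj : d = j
        · rw [hdj]; exact hjUW
        · intro h
          exact hdWhat ((hdon (insert d T) (by simp [Ne.symm hdi, hi])
            (by simp [Ne.symm hdj, hj])).2.2.2.2 h)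
      · rintro ⟨hdT, hdW⟩
        refine ⟨hdT, ?_⟩
        by_cases hdi : d = i
        · rw [hdi]; exact hiTWhat
        by_cases hdj : d = j
        · rw [hdj]; intro h; exact hT (hd3.1 h)
        · intro h
          exact hdW ((hdon (insert d T) (by simp [Ne.symm hdi, hi])
            (by simp [Ne.symm hdj, hj])).2.2.2.1 h)
    rw [hKeq]
    constructor
    · apply mean_le _ _ id (Set.injOn_id _)
      · exact fun k hk => by simpa using hk
      · intro k hk
        obtain ⟨hkT, hkW⟩ := mem_Kset.1 hk
        simp only [id]
        by_cases hki : k = i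
        · rw [hki, alphaMinus_of_mem (Finset.mem_insert_self i _)]
          exact alphaMinus_nonneg _ _ _
        by_cases hkj : k = j
        · rw [hkj]
          exact (lemB hW hij hdon T hi hj).1
        · exact (lemA hW hij hdon (insert k T) (by simp [Ne.symm hki, hi])
            (by simp [Ne.symm hkj, hj])).1
      · intro d hd hnd
        rw [Finset.image_id] at hnd
        exact absurd hd hnd
      · exact fun k _ => alphaMinus_nonneg _ _ _
      · exact fun k _ => alphaMinus_le_one _ _ _
      · exact ⟨i, hiK⟩
    · apply mean_le _ _ (Equiv.swap i j) (Equiv.injective _).injOn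
      · intro k hk
        obtain ⟨hkT, hkW⟩ := mem_Kset.1 hk
        by_cases hki : k = i
        · rw [hki, Equiv.swap_apply_left]; exact hjK
        by_cases hkj : k = j
        · rw [hkj, Equiv.swap_apply_right]; exact hiK
        · rw [Equiv.swap_apply_of_ne_of_ne hki hkj]; exact hk
      · intro k hk
        obtain ⟨hkT, hkW⟩ := mem_Kset.1 hk
        by_cases hki : k = i
        · rw [hki, Equiv.swap_apply_left]
          exact (lemB hW hij hdon T hi hj).2
        by_cases hkj : k = j
        · rw [hkj, Equiv.swap_apply_right,
            alphaMinus_of_mem (Finset.mem_insert_self j _)]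
          exact alphaMinus_nonneg _ _ _
        · rw [Equiv.swap_apply_of_ne_of_ne hki hkj]
          exact (lemA hW hij hdon (insert k T) (by simp [Ne.symm hki, hi])
            (by simp [Ne.symm hkj, hj])).2
      · intro d hd hnd
        exfalso
        obtain ⟨hdT, hdW⟩ := mem_Kset.1 hd
        by_cases hdi : d = i
        · refine hnd (Finset.mem_image.2 ⟨j, hjK, ?_⟩)
          rw [hdi, Equiv.swap_apply_right]
        by_cases hdj : d = j
        · refine hnd (Finset.mem_image.2 ⟨i, hiK, ?_⟩)
          rw [hdj, Equiv.swap_apply_left]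
        · exact hnd (Finset.mem_image.2 ⟨d, hd, Equiv.swap_apply_of_ne_of_ne hdi hdj⟩)
      · exact fun k _ => alphaMinus_nonneg _ _ _
      · exact fun k _ => alphaMinus_le_one _ _ _
      · exact ⟨i, hiK⟩
termination_by Tᶜ.card
decreasing_by
  all_goals
    rw [Finset.compl_insert]
    exact Finset.card_erase_lt_of_mem (Finset.mem_compl.2 hkT)

end Main2

/-- donation and NO-efficacy scores. -/
theorem donation_alphaMinus {n : ℕ} (W What : Finset (Finset (Fin n)))
    (hW : SimpleVotingGame W) (i j : Fin n) (hij : i ≠ j)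
    (hdon : Donation W What i j) :
    ∀ S : Finset (Fin n), i ∈ S → j ∈ S →
      max (alphaMinus W i ((S.erase i).erase j)) (alphaMinus W j ((S.erase i).erase j)) ≤
        alphaMinus What i ((S.erase i).erase j) ∧
      max (alphaMinus W i (S.erase i)) (alphaMinus W j (S.erase j)) ≤
        alphaMinus What i (S.erase i) := by
  intro S hiS hjS
  set T := (S.erase i).erase j with hT
  have hiT : i ∉ T := by simp [hT, Finset.mem_erase]
  have hjT : j ∉ T := Finset.notMem_erase _ _
  have hSi : S.erase i = insert j T := by
    rw [hT, Finset.insert_erase (Finset.mem_erase.2 ⟨hij.symm, hjS⟩)]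
  have hSj : S.erase j = insert i T := by
    rw [hT, ← Finset.erase_right_comm,
      Finset.insert_erase (Finset.mem_erase.2 ⟨hij, hiS⟩)]
  constructor
  · exact max_le (lemA hW hij hdon T hiT hjT).1 (lemA hW hij hdon T hiT hjT).2
  · rw [hSi, hSj]
    exact max_le (lemB hW hij hdon T hiT hjT).1 (lemB hW hij hdon T hiT hjT).2
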